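/- Let M ≥ 1 and let (X_j)_{j=1}^M and (X′_j)_{j=1}^M be mutually independent random variables, where X_j is exponentially distributed with mean λ_j > 0 and X′_j is exponentially distributed with mean λ′_j > 0. Let a, u > 0. Then lim_{ρ → ∞} ℙ( max_{1≤j≤M} ρ·X_j/(a·ρ·X′_j + 1) > u ) = 1 − ∏_{j=1}^M ( a·λ′_j·u/(λ_j + a·λ′_j·u) ). -/

import Mathlib

open MeasureTheory ProbabilityTheory Real Filter

/-- A real random variable `X` is exponentially distributed with mean `lam > 0` if its law has
density `(1/lam) * exp (-x/lam)` on `[0, ∞)` and `0` on `(-∞, 0)`. -/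
def HasExpLaw {Ω : Type*} [MeasurableSpace Ω] (P : Measure Ω) (X : Ω → ℝ) (lam : ℝ) : Prop :=
  Measurable X ∧
    P.map X = MeasureTheory.volume.withDensity
      (fun x => ENNReal.ofReal (if 0 ≤ x then (1 / lam) * Real.exp (-x / lam) else 0))

lemma expMeasure_eq_withDensity (r : ℝ) :
    expMeasure r = MeasureTheory.volume.withDensity (exponentialPDF r) := rfl

lemma expLaw_eq_expMeasure {lam : ℝ} (hlam : 0 < lam) :
    (MeasureTheory.volume.withDensity
      (fun x => ENNReal.ofReal (if 0 ≤ x then (1 / lam) * Real.exp (-x / lam) else 0)))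
      = expMeasure (1 / lam) := by
  rw [expMeasure_eq_withDensity]
  congr 1
  funext x
  rw [exponentialPDF_eq]
  congr 1
  split_ifs with hx
  · have h : -x / lam = -(1 / lam * x) := by ring
    rw [h]
  · rfl

lemma expMeasure_Ioi {r t : ℝ} (hr : 0 < r) (ht : 0 ≤ t) :
    expMeasure r (Set.Ioi t) = ENNReal.ofReal (Real.exp (-(r * t))) := by
  haveI := isProbabilityMeasure_expMeasure hr
  have hIic : expMeasure r (Set.Iic t) = ENNReal.ofReal (1 - Real.exp (-(r * t))) := by
    rw [expMeasure_eq_withDensity, withDensity_apply _ measurableSet_Iic,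
      lintegral_exponentialPDF_eq_antiDeriv hr, if_pos ht]
  have h1 : Set.Ioi t = (Set.Iic t)ᶜ := (Set.compl_Iic).symm
  have he1 : Real.exp (-(r * t)) ≤ 1 := Real.exp_le_one_iff.mpr (by nlinarith)
  rw [h1, prob_compl_eq_one_sub measurableSet_Iic, hIic,
    ← ENNReal.ofReal_one, ← ENNReal.ofReal_sub _ (by linarith)]
  norm_num

lemma expMeasure_Iio_zero {r : ℝ} : expMeasure r (Set.Iio 0) = 0 := by
  rw [expMeasure_eq_withDensity, withDensity_apply _ measurableSet_Iio]
  exact lintegral_exponentialPDF_of_nonpos le_rfl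

lemma measurable_expPDF (r : ℝ) : Measurable (exponentialPDF r) :=
  (measurable_exponentialPDFReal r).ennreal_ofReal

lemma prod_factor {r r' b c : ℝ} (hr : 0 < r) (hr' : 0 < r') (hb : 0 < b) (hc : 0 ≤ c) :
    ((expMeasure r').prod (expMeasure r)) {p : ℝ × ℝ | b * p.1 + c < p.2}
      = ENNReal.ofReal (Real.exp (-(r * c)) * (r' / (r * b + r'))) := by
  haveI := isProbabilityMeasure_expMeasure hr
  haveI := isProbabilityMeasure_expMeasure hr'
  have hTmeas : MeasurableSet {p : ℝ × ℝ | b * p.1 + c < p.2} :=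
    measurableSet_lt (by fun_prop) measurable_snd
  rw [Measure.prod_apply hTmeas]
  have hslice : ∀ y : ℝ, (Prod.mk y ⁻¹' {p : ℝ × ℝ | b * p.1 + c < p.2}) = Set.Ioi (b * y + c) :=
    fun y => rfl
  simp only [hslice]
  have hae : ∀ᵐ y ∂(expMeasure r'), 0 ≤ y := by
    rw [ae_iff]
    have hset : {y : ℝ | ¬ 0 ≤ y} = Set.Iio 0 := by ext y; simp
    rw [hset]
    exact expMeasure_Iio_zero
  have hcongr : (fun y => expMeasure r (Set.Ioi (b * y + c)))
      =ᵐ[expMeasure r'] (fun y => ENNReal.ofReal (Real.exp (-(r * (b * y + c))))) := by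
    filter_upwards [hae] with y hy
    exact expMeasure_Ioi hr (by positivity)
  rw [lintegral_congr_ae hcongr, expMeasure_eq_withDensity,
    lintegral_withDensity_eq_lintegral_mul _ (measurable_expPDF r') (by fun_prop)]
  have hs : 0 < r * b + r' := by positivity
  have hpt : ∀ y : ℝ, exponentialPDF r' y * ENNReal.ofReal (Real.exp (-(r * (b * y + c))))
      = ENNReal.ofReal (Real.exp (-(r * c)) * (r' / (r * b + r'))) * exponentialPDF (r * b + r') y := by
    intro y
    rw [exponentialPDF_eq, exponentialPDF_eq, ← ENNReal.ofReal_mul (by positivity),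
      ← ENNReal.ofReal_mul (by positivity)]
    congr 1
    split_ifs with hy
    · have h1 : Real.exp (-(r' * y)) * Real.exp (-(r * (b * y + c)))
          = Real.exp (-(r * c)) * Real.exp (-((r * b + r') * y)) := by
        rw [← Real.exp_add, ← Real.exp_add]
        ring_nf
      calc r' * Real.exp (-(r' * y)) * Real.exp (-(r * (b * y + c)))
          = r' * (Real.exp (-(r' * y)) * Real.exp (-(r * (b * y + c)))) := by ring
        _ = r' * (Real.exp (-(r * c)) * Real.exp (-((r * b + r') * y))) := by rw [h1]
        _ = Real.exp (-(r * c)) * (r' / (r * b + r')) * ((r * b + r') * Real.exp (-((r * b + r') * y))) := by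
            field_simp
    · simp
  simp only [Pi.mul_apply, hpt]
  rw [lintegral_const_mul _ (measurable_expPDF _), lintegral_exponentialPDF_eq_one hs, mul_one]

lemma pairs_iIndepFun {Ω : Type*} [MeasurableSpace Ω] {P : Measure Ω} [IsProbabilityMeasure P]
    {M : ℕ} {X X' : Fin M → Ω → ℝ}
    (hX : ∀ j, Measurable (X j)) (hX' : ∀ j, Measurable (X' j))
    (hindep : iIndepFun (Sum.elim X X') P) :
    iIndepFun (fun j ω => (X' j ω, X j ω)) P := by
  rw [iIndepFun_iff_iIndep]
  set rects : Fin M → Set (Set Ω) := fun j =>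
    {E | ∃ s t : Set ℝ, MeasurableSet s ∧ MeasurableSet t ∧ E = X' j ⁻¹' s ∩ X j ⁻¹' t} with hrects
  have hgen : ∀ j, MeasurableSpace.comap (fun ω => (X' j ω, X j ω)) inferInstance
      = MeasurableSpace.generateFrom (rects j) := by
    intro j
    conv_lhs => rw [← generateFrom_prod]
    rw [MeasurableSpace.comap_generateFrom]
    congr 1
    ext E
    simp only [Set.mem_image, Set.mem_image2, Set.mem_setOf_eq, hrects]
    constructor
    · rintro ⟨F, ⟨s, hs, t, ht, rfl⟩, rfl⟩
      exact ⟨s, t, hs, ht, (Set.mk_preimage_prod _ _).symm⟩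
    · rintro ⟨s, t, hs, ht, rfl⟩
      exact ⟨s ×ˢ t, ⟨s, hs, t, ht, rfl⟩, Set.mk_preimage_prod _ _⟩
  refine iIndepSets.iIndep (fun j => Measurable.comap_le ((hX' j).prodMk (hX j))) rects
    (fun j => ?_) hgen ?_
  · rintro E1 ⟨s1, t1, hs1, ht1, rfl⟩ E2 ⟨s2, t2, hs2, ht2, rfl⟩ _
    exact ⟨s1 ∩ s2, t1 ∩ t2, hs1.inter hs2, ht1.inter ht2, by
      ext ω; simp only [Set.mem_inter_iff, Set.mem_preimage]; tauto⟩
  · rw [iIndepSets_iff]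
    intro S f hf
    choose! s t hs ht hE using hf
    set g : (Fin M ⊕ Fin M) → Set Ω := Sum.elim (fun i => X i ⁻¹' t i) (fun i => X' i ⁻¹' s i)
      with hg
    have hbig : P (⋂ k ∈ S.disjSum S, g k) = ∏ k ∈ S.disjSum S, P (g k) := by
      refine hindep.meas_biInter (fun k hk => ?_)
      rcases k with i | i
      · exact ⟨t i, ht i (Finset.inl_mem_disjSum.mp hk), rfl⟩
      · exact ⟨s i, hs i (Finset.inr_mem_disjSum.mp hk), rfl⟩
    have hset : (⋂ k ∈ S.disjSum S, g k) = ⋂ i ∈ S, f i := by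
      ext ω
      simp only [Set.mem_iInter, hg]
      constructor
      · intro h i hi
        rw [hE i hi]
        exact ⟨h (Sum.inr i) (Finset.inr_mem_disjSum.mpr hi),
          h (Sum.inl i) (Finset.inl_mem_disjSum.mpr hi)⟩
      · rintro h (i | i) hk
        · have hi := Finset.inl_mem_disjSum.mp hk
          have := h i hi
          rw [hE i hi] at this
          exact this.2
        · have hi := Finset.inr_mem_disjSum.mp hk
          have := h i hi
          rw [hE i hi] at this
          exact this.1
    have hprod : ∏ k ∈ S.disjSum S, P (g k) = ∏ i ∈ S, P (f i) := by
      rw [Finset.prod_disjSum]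
      rw [← Finset.prod_mul_distrib]
      refine Finset.prod_congr rfl (fun i hi => ?_)
      have hip : IndepFun (X' i) (X i) P :=
        hindep.indepFun (show (Sum.inr i : Fin M ⊕ Fin M) ≠ Sum.inl i by simp)
      have := hip.meas_inter (s := X' i ⁻¹' s i) (t := X i ⁻¹' t i)
        ⟨s i, hs i hi, rfl⟩ ⟨t i, ht i hi, rfl⟩
      rw [hE i hi, this, hg]
      simp [mul_comm]
    rw [hset] at hbig
    rw [hbig, hprod]

theorem stmt_14 {Ω : Type*} [MeasurableSpace Ω] (P : Measure Ω) [IsProbabilityMeasure P]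
    (M : ℕ) (hM : 1 ≤ M) (lam lam' : Fin M → ℝ)
    (hlam : ∀ j, 0 < lam j) (hlam' : ∀ j, 0 < lam' j)
    (a u : ℝ) (ha : 0 < a) (hu : 0 < u)
    (X X' : Fin M → Ω → ℝ)
    (hX : ∀ j, HasExpLaw P (X j) (lam j)) (hX' : ∀ j, HasExpLaw P (X' j) (lam' j))
    (hindep : iIndepFun (Sum.elim X X') P) :
    Tendsto
      (fun ρ : ℝ =>
        (P {ω | ∃ j : Fin M, ρ * X j ω / (a * ρ * X' j ω + 1) > u}).toReal)
      atTop
      (nhds (1 - ∏ j : Fin M, (a * lam' j * u / (lam j + a * lam' j * u)))) := by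
  have hXm : ∀ j, Measurable (X j) := fun j => (hX j).1
  have hX'm : ∀ j, Measurable (X' j) := fun j => (hX' j).1
  set r : Fin M → ℝ := fun j => 1 / lam j with hr_def
  set r' : Fin M → ℝ := fun j => 1 / lam' j with hr'_def
  have hr : ∀ j, 0 < r j := fun j => by
    have h := hlam j; simp only [hr_def]; positivity
  have hr' : ∀ j, 0 < r' j := fun j => by
    have h := hlam' j; simp only [hr'_def]; positivity
  have hXlaw : ∀ j, P.map (X j) = expMeasure (r j) := fun j => by
    rw [(hX j).2, expLaw_eq_expMeasure (hlam j)]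
  have hX'law : ∀ j, P.map (X' j) = expMeasure (r' j) := fun j => by
    rw [(hX' j).2, expLaw_eq_expMeasure (hlam' j)]
  have hpairs := pairs_iIndepFun hXm hX'm hindep
  have hlaw : ∀ j, P.map (fun ω => (X' j ω, X j ω))
      = (expMeasure (r' j)).prod (expMeasure (r j)) := by
    intro j
    have hind : IndepFun (X' j) (X j) P := by
      have := hindep.indepFun (show (Sum.inr j : Fin M ⊕ Fin M) ≠ Sum.inl j by simp)
      simpa using this
    rw [(indepFun_iff_map_prod_eq_prod_map_map (hX'm j).aemeasurable
      (hXm j).aemeasurable).mp hind, hXlaw j, hX'law j]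
  set q : ℝ → Fin M → ℝ := fun ρ j =>
    Real.exp (-(r j * (u / ρ))) * (r' j / (r j * (a * u) + r' j)) with hq_def
  have hq_pos : ∀ ρ j, 0 < q ρ j := by
    intro ρ j
    have h1 := hr j
    have h2 := hr' j
    have h3 : 0 < a * u := mul_pos ha hu
    simp only [hq_def]
    positivity
  have hq_le1 : ∀ ρ : ℝ, 0 < ρ → ∀ j, q ρ j ≤ 1 := by
    intro ρ hρ j
    have hj1 := hr j
    have hj2 := hr' j
    have h1 : Real.exp (-(r j * (u / ρ))) ≤ 1 := by
      apply Real.exp_le_one_iff.mpr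
      have : 0 ≤ r j * (u / ρ) := by positivity
      linarith
    have h2 : r' j / (r j * (a * u) + r' j) ≤ 1 := by
      rw [div_le_one (by positivity)]
      nlinarith [mul_pos (hr j) (mul_pos ha hu)]
    calc q ρ j ≤ 1 * 1 := by
          apply mul_le_mul h1 h2 (by positivity) zero_le_one
      _ = 1 := by norm_num
  have hev : ∀ᶠ ρ in atTop, (P {ω | ∃ j, ρ * X j ω / (a * ρ * X' j ω + 1) > u}).toReal
      = 1 - ∏ j, (1 - q ρ j) := by
    filter_upwards [eventually_gt_atTop (0:ℝ)] with ρ hρ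
    have hc : 0 < u / ρ := div_pos hu hρ
    set T : Set (ℝ × ℝ) := {p | (a * u) * p.1 + (u / ρ) < p.2} with hT_def
    have hTmeas : MeasurableSet T := measurableSet_lt (by fun_prop) measurable_snd
    set B : Fin M → Set Ω := fun j => (fun ω => (X' j ω, X j ω)) ⁻¹' T with hB_def
    have hMeasB : ∀ j, MeasurableSet (B j) := fun j => ((hX'm j).prodMk (hXm j)) hTmeas
    have haeX' : ∀ᵐ ω ∂P, ∀ j, 0 ≤ X' j ω := by
      rw [ae_all_iff]
      intro j
      rw [ae_iff]
      have hset : {ω | ¬ 0 ≤ X' j ω} = X' j ⁻¹' (Set.Iio 0) := by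
        ext ω; simp
      rw [hset, ← Measure.map_apply (hX'm j) measurableSet_Iio, hX'law j]
      exact expMeasure_Iio_zero
    have hEvent : P {ω | ∃ j, ρ * X j ω / (a * ρ * X' j ω + 1) > u} = P (⋃ j, B j) := by
      apply measure_congr
      filter_upwards [haeX'] with ω hω
      have hiff : ∀ j, (ρ * X j ω / (a * ρ * X' j ω + 1) > u) ↔ ω ∈ B j := by
        intro j
        have hd : 0 < a * ρ * X' j ω + 1 := by
          have h := hω j
          positivity
        rw [hB_def]
        simp only [Set.mem_preimage, hT_def, Set.mem_setOf_eq]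
        rw [gt_iff_lt, lt_div_iff₀ hd]
        have key : u * (a * ρ * X' j ω + 1) = ρ * ((a * u) * X' j ω + u / ρ) := by
          field_simp
        rw [key]
        exact mul_lt_mul_iff_right₀ hρ
      have : (∃ j, ρ * X j ω / (a * ρ * X' j ω + 1) > u) ↔ ω ∈ ⋃ j, B j := by
        rw [Set.mem_iUnion]
        exact exists_congr hiff
      exact propext this
    have hBc : ∀ j, P ((B j)ᶜ) = ENNReal.ofReal (1 - q ρ j) := by
      intro j
      have hcompl : (B j)ᶜ = (fun ω => (X' j ω, X j ω)) ⁻¹' Tᶜ := rfl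
      haveI := isProbabilityMeasure_expMeasure (hr j)
      haveI := isProbabilityMeasure_expMeasure (hr' j)
      rw [hcompl, ← Measure.map_apply ((hX'm j).prodMk (hXm j)) hTmeas.compl, hlaw j,
        prob_compl_eq_one_sub hTmeas, hT_def,
        prod_factor (hr j) (hr' j) (by positivity) hc.le,
        ← ENNReal.ofReal_one, ← ENNReal.ofReal_sub _ (hq_pos ρ j).le]
    have hInter : P (⋂ j, (B j)ᶜ) = ENNReal.ofReal (∏ j, (1 - q ρ j)) := by
      have hpre : (⋂ j, (B j)ᶜ) = ⋂ j, (fun ω => (X' j ω, X j ω)) ⁻¹' Tᶜ := by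
        refine Set.iInter_congr fun j => ?_
        rw [hB_def, Set.preimage_compl]
      have hfac : ∏ j : Fin M, P ((fun ω => (X' j ω, X j ω)) ⁻¹' Tᶜ)
          = ∏ j : Fin M, ENNReal.ofReal (1 - q ρ j) :=
        Finset.prod_congr rfl (fun j _ => hBc j)
      rw [hpre, hpairs.meas_iInter (fun j => ⟨Tᶜ, hTmeas.compl, rfl⟩), hfac,
        ← ENNReal.ofReal_prod_of_nonneg (fun j _ => by linarith [hq_le1 ρ hρ j])]
    have hprod_mem : 0 ≤ ∏ j, (1 - q ρ j) ∧ ∏ j, (1 - q ρ j) ≤ 1 := by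
      constructor
      · exact Finset.prod_nonneg (fun j _ => by linarith [hq_le1 ρ hρ j])
      · exact Finset.prod_le_one (fun j _ => by linarith [hq_le1 ρ hρ j])
          (fun j _ => by linarith [hq_pos ρ j])
    have hUnion : P (⋃ j, B j) = 1 - ENNReal.ofReal (∏ j, (1 - q ρ j)) := by
      have h1 : (⋃ j, B j) = (⋂ j, (B j)ᶜ)ᶜ := by
        simp [Set.compl_iInter]
      rw [h1, prob_compl_eq_one_sub (MeasurableSet.iInter fun j => (hMeasB j).compl), hInter]
    rw [hEvent, hUnion, ← ENNReal.ofReal_one, ← ENNReal.ofReal_sub _ hprod_mem.1,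
      ENNReal.toReal_ofReal (by linarith [hprod_mem.2])]
  have h0 : Tendsto (fun ρ : ℝ => u / ρ) atTop (nhds 0) :=
    tendsto_const_nhds.div_atTop tendsto_id
  have hq_lim : ∀ j : Fin M, Tendsto (fun ρ => 1 - q ρ j) atTop
      (nhds (a * lam' j * u / (lam j + a * lam' j * u))) := by
    intro j
    have hcont : Continuous fun t : ℝ =>
        1 - Real.exp (-(r j * t)) * (r' j / (r j * (a * u) + r' j)) := by fun_prop
    have hval : a * lam' j * u / (lam j + a * lam' j * u)
        = 1 - Real.exp (-(r j * 0)) * (r' j / (r j * (a * u) + r' j)) := by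
      simp only [mul_zero, neg_zero, Real.exp_zero, one_mul, hr_def, hr'_def]
      have hl1 := hlam j
      have hl2 := hlam' j
      have h1 : lam j ≠ 0 := (hlam j).ne'
      have h2 : lam' j ≠ 0 := (hlam' j).ne'
      have h3 : lam j + a * lam' j * u ≠ 0 := by positivity
      have h3' : a * lam' j * u + lam j ≠ 0 := by positivity
      have h4 : 1 / lam j * (a * u) + 1 / lam' j ≠ 0 := by positivity
      field_simp
      ring
    rw [hval]
    have := (hcont.tendsto 0).comp h0
    simpa [Function.comp_def, hq_def] using this
  have hlim : Tendsto (fun ρ => 1 - ∏ j, (1 - q ρ j)) atTop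
      (nhds (1 - ∏ j : Fin M, (a * lam' j * u / (lam j + a * lam' j * u)))) :=
    Tendsto.const_sub 1 (tendsto_finset_prod _ (fun j _ => hq_lim j))
  exact hlim.congr' (hev.mono fun ρ h => h.symm)
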